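/- Let n be a natural number, and let H(q,p) = ½ ∑_{i,j} p_i M^{ij}(q) p_j + h(q) and Ĥ(q,p) = ½ ∑_{i,j} p_i M̂^{ij}(q) p_j + ĥ(q) be simple Hamiltonians on ℝⁿ × ℝⁿ (M, M̂ symmetric-valued C¹, h, ĥ C¹). Suppose there are a family of subspaces W(q) ⊆ ℝⁿ, a function μ : ℝⁿ × ℝⁿ → ℝ with μ ≥ 0, and a map y : ℝⁿ × ℝⁿ → ℝⁿ such that for all (q,p): y(q,p) ∈ W(q) and ⟨y(q,p), M̂(q)p⟩ = −μ(q,p) − {Ĥ,H}(q,p). Then for every q ∈ ℝⁿ and every σ ∈ ℝⁿ with M̂(q)σ Euclidean-orthogonal to W(q), the simple matching conditions hold: ∑_{i,j,k,l} (∂M̂^{ij}/∂q^k (q) · M^{kl}(q) − ∂M^{ij}/∂q^k (q) · M̂^{kl}(q)) σ_i σ_j σ_l = 0 (kinetic matching condition) and ∑_{k,l} (∂ĥ/∂q^k (q) · M^{kl}(q) − ∂h/∂q^k (q) · M̂^{kl}(q)) σ_l = 0 (potential matching condition). -/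

import Mathlib

open scoped BigOperators

/-- The simple Hamiltonian `H(q,p) = ½ ∑_{i,j} pᵢ M^{ij}(q) pⱼ + h(q)` on `ℝⁿ × ℝⁿ`. -/
noncomputable def simpleHam (n : ℕ) (M : (Fin n → ℝ) → Matrix (Fin n) (Fin n) ℝ)
    (h : (Fin n → ℝ) → ℝ) : (Fin n → ℝ) × (Fin n → ℝ) → ℝ :=
  fun x => (1 / 2) * (∑ i, ∑ j, x.2 i * M x.1 i j * x.2 j) + h x.1

/-- The canonical Poisson bracket
`{F,G}(q,p) = ∑ᵢ (∂F/∂qⁱ ∂G/∂pᵢ − ∂G/∂qⁱ ∂F/∂pᵢ)` on `ℝⁿ × ℝⁿ`. -/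
noncomputable def poissonBracket (n : ℕ) (F G : (Fin n → ℝ) × (Fin n → ℝ) → ℝ)
    (x : (Fin n → ℝ) × (Fin n → ℝ)) : ℝ :=
  ∑ i, (fderiv ℝ F x (Pi.single i 1, 0) * fderiv ℝ G x (0, Pi.single i 1)
      - fderiv ℝ G x (Pi.single i 1, 0) * fderiv ℝ F x (0, Pi.single i 1))

lemma fderiv_simpleHam_apply (n : ℕ) (M : (Fin n → ℝ) → Matrix (Fin n) (Fin n) ℝ)
    (h : (Fin n → ℝ) → ℝ)
    (hM : ∀ i j, ContDiff ℝ 1 fun q => M q i j) (hh : ContDiff ℝ 1 h)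
    (q p v w : Fin n → ℝ) :
    fderiv ℝ (simpleHam n M h) (q, p) (v, w) =
      (1 / 2) * (∑ i, ∑ j,
        (w i * M q i j * p j + p i * (fderiv ℝ (fun q' => M q' i j) q v) * p j
          + p i * M q i j * w j)) + fderiv ℝ h q v := by
  have hA : ∀ i : Fin n, HasFDerivAt
      (fun x : (Fin n → ℝ) × (Fin n → ℝ) => x.2 i)
      ((ContinuousLinearMap.proj i).comp (ContinuousLinearMap.snd ℝ (Fin n → ℝ) (Fin n → ℝ))) (q, p) :=
    fun i => by
      have := ((ContinuousLinearMap.proj (R := ℝ) (φ := fun _ : Fin n => ℝ) i).comp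
        (ContinuousLinearMap.snd ℝ (Fin n → ℝ) (Fin n → ℝ))).hasFDerivAt (x := (q, p))
      exact this
  have hB : ∀ i j, HasFDerivAt (fun x : (Fin n → ℝ) × (Fin n → ℝ) => M x.1 i j)
      ((fderiv ℝ (fun q' => M q' i j) q).comp (ContinuousLinearMap.fst ℝ (Fin n → ℝ) (Fin n → ℝ))) (q, p) :=
    fun i j => by have := (((hM i j).differentiable one_ne_zero q).hasFDerivAt).comp (q, p) (hasFDerivAt_fst (𝕜 := ℝ) (p := (q, p))); exact this
  have hS : HasFDerivAt (simpleHam n M h) _ (q, p) :=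
    (HasFDerivAt.const_mul (HasFDerivAt.fun_sum (fun i _ =>
        HasFDerivAt.fun_sum (fun j _ => ((hA i).mul (hB i j)).mul (hA j)))) (1/2)).add
      (((hh.differentiable one_ne_zero q).hasFDerivAt).comp (q, p) hasFDerivAt_fst)
  rw [hS.fderiv]
  simp only [ContinuousLinearMap.add_apply, ContinuousLinearMap.smul_apply,
    ContinuousLinearMap.coe_sum', Finset.sum_apply, ContinuousLinearMap.coe_comp',
    Function.comp_apply, ContinuousLinearMap.proj_apply, ContinuousLinearMap.coe_fst',
    ContinuousLinearMap.coe_snd', smul_eq_mul, Pi.mul_apply]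
  congr 1
  congr 1
  refine Finset.sum_congr rfl fun i _ => Finset.sum_congr rfl fun j _ => ?_
  ring

/-- solvability of the Lyapunov constraint equation forces Chang's simple
(kinetic and potential) matching conditions on the subspace `{σ | M̂(q)σ ⊥ W(q)}`. -/
theorem lyapunov_solvable_implies_simple_matching_conditions
    (n : ℕ)
    (M Mhat : (Fin n → ℝ) → Matrix (Fin n) (Fin n) ℝ)
    (h hhat : (Fin n → ℝ) → ℝ)
    (hM : ∀ i j, ContDiff ℝ 1 fun q => M q i j)
    (hMhat : ∀ i j, ContDiff ℝ 1 fun q => Mhat q i j)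
    (hMsymm : ∀ q i j, M q i j = M q j i)
    (hMhatsymm : ∀ q i j, Mhat q i j = Mhat q j i)
    (hh : ContDiff ℝ 1 h) (hhhat : ContDiff ℝ 1 hhat)
    (W : (Fin n → ℝ) → Submodule ℝ (Fin n → ℝ))
    (μ : (Fin n → ℝ) × (Fin n → ℝ) → ℝ)
    (y : (Fin n → ℝ) × (Fin n → ℝ) → (Fin n → ℝ))
    (hμ : ∀ x, 0 ≤ μ x)
    (hyW : ∀ x, y x ∈ W x.1)
    (hy : ∀ x, (∑ i, y x i * (Mhat x.1).mulVec x.2 i)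
        = -μ x - poissonBracket n (simpleHam n Mhat hhat) (simpleHam n M h) x) :
    ∀ (q σ : Fin n → ℝ),
      (∀ w ∈ W q, (∑ i, (Mhat q).mulVec σ i * w i) = 0) →
      (∑ i, ∑ j, ∑ k, ∑ l,
          (fderiv ℝ (fun q' => Mhat q' i j) q (Pi.single k 1) * M q k l
            - fderiv ℝ (fun q' => M q' i j) q (Pi.single k 1) * Mhat q k l)
          * σ i * σ j * σ l) = 0
      ∧
      (∑ k, ∑ l,
          (fderiv ℝ hhat q (Pi.single k 1) * M q k l
            - fderiv ℝ h q (Pi.single k 1) * Mhat q k l)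
          * σ l) = 0 := by
  intro q σ horth
  have prod_sum : ∀ (f : Fin n → Fin n → ℝ) (g : Fin n → ℝ),
      (∑ i, ∑ j, f i j) * (∑ l, g l) = ∑ i, ∑ j, ∑ l, f i j * g l := by
    intro f g
    rw [Finset.sum_mul]
    refine Finset.sum_congr rfl fun i _ => ?_
    rw [Finset.sum_mul]
    refine Finset.sum_congr rfl fun j _ => ?_
    rw [Finset.mul_sum]
  have comm4 : ∀ (F : Fin n → Fin n → Fin n → Fin n → ℝ),
      (∑ i, ∑ j, ∑ k, ∑ l, F i j k l) = ∑ k, ∑ i, ∑ j, ∑ l, F i j k l := by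
    intro F
    calc (∑ i, ∑ j, ∑ k, ∑ l, F i j k l)
        = ∑ i, ∑ k, ∑ j, ∑ l, F i j k l :=
          Finset.sum_congr rfl fun i _ => Finset.sum_comm
      _ = ∑ k, ∑ i, ∑ j, ∑ l, F i j k l := Finset.sum_comm
  set A := (∑ i, ∑ j, ∑ k, ∑ l,
      (fderiv ℝ (fun q' => Mhat q' i j) q (Pi.single k 1) * M q k l
        - fderiv ℝ (fun q' => M q' i j) q (Pi.single k 1) * Mhat q k l)
      * σ i * σ j * σ l) with hAdef
  set B := (∑ k, ∑ l,
      (fderiv ℝ hhat q (Pi.single k 1) * M q k l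
        - fderiv ℝ h q (Pi.single k 1) * Mhat q k l) * σ l) with hBdef
  -- restructure A and B as sums over k of products
  have hA2 : A = ∑ k,
      ((∑ i, ∑ j, σ i * fderiv ℝ (fun q' => Mhat q' i j) q (Pi.single k 1) * σ j)
          * (∑ l, M q k l * σ l)
        - (∑ i, ∑ j, σ i * fderiv ℝ (fun q' => M q' i j) q (Pi.single k 1) * σ j)
          * (∑ l, Mhat q k l * σ l)) := by
    rw [hAdef, comm4]
    refine Finset.sum_congr rfl fun k _ => ?_
    rw [prod_sum, prod_sum, ← Finset.sum_sub_distrib]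
    refine Finset.sum_congr rfl fun i _ => ?_
    rw [← Finset.sum_sub_distrib]
    refine Finset.sum_congr rfl fun j _ => ?_
    rw [← Finset.sum_sub_distrib]
    refine Finset.sum_congr rfl fun l _ => ?_
    ring
  have hB2 : B = ∑ k,
      (fderiv ℝ hhat q (Pi.single k 1) * (∑ l, M q k l * σ l)
        - fderiv ℝ h q (Pi.single k 1) * (∑ l, Mhat q k l * σ l)) := by
    rw [hBdef]
    refine Finset.sum_congr rfl fun k _ => ?_
    rw [Finset.mul_sum, Finset.mul_sum, ← Finset.sum_sub_distrib]
    refine Finset.sum_congr rfl fun l _ => ?_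
    ring
  have key : ∀ t : ℝ, poissonBracket n (simpleHam n Mhat hhat) (simpleHam n M h) (q, t • σ)
      = (1/2) * A * t^3 + B * t := by
    intro t
    have evq : ∀ (M' : (Fin n → ℝ) → Matrix (Fin n) (Fin n) ℝ) (h' : (Fin n → ℝ) → ℝ)
        (hM' : ∀ i j, ContDiff ℝ 1 fun q => M' q i j) (hh' : ContDiff ℝ 1 h') (k : Fin n),
        fderiv ℝ (simpleHam n M' h') (q, t • σ) (Pi.single k 1, (0 : Fin n → ℝ))
          = (1/2) * (∑ i, ∑ j,
              (t * σ i) * (fderiv ℝ (fun q' => M' q' i j) q (Pi.single k 1)) * (t * σ j))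
            + fderiv ℝ h' q (Pi.single k 1) := by
      intro M' h' hM' hh' k
      rw [fderiv_simpleHam_apply n M' h' hM' hh']
      simp [smul_eq_mul]
    have evp : ∀ (M' : (Fin n → ℝ) → Matrix (Fin n) (Fin n) ℝ) (h' : (Fin n → ℝ) → ℝ)
        (hM' : ∀ i j, ContDiff ℝ 1 fun q => M' q i j) (hh' : ContDiff ℝ 1 h')
        (hsym : ∀ q i j, M' q i j = M' q j i) (k : Fin n),
        fderiv ℝ (simpleHam n M' h') (q, t • σ) ((0 : Fin n → ℝ), Pi.single k 1)
          = t * ∑ l, M' q k l * σ l := by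
      intro M' h' hM' hh' hsym k
      rw [fderiv_simpleHam_apply n M' h' hM' hh']
      simp only [map_zero, mul_zero, zero_mul, add_zero, zero_add, Pi.smul_apply, smul_eq_mul]
      have hsplit : (∑ i, ∑ j, ((Pi.single k 1 : Fin n → ℝ) i * M' q i j * (t * σ j)
            + (t * σ i) * M' q i j * (Pi.single k 1 : Fin n → ℝ) j))
          = (∑ j, M' q k j * (t * σ j)) + (∑ i, (t * σ i) * M' q i k) := by
        simp [Finset.sum_add_distrib, Pi.single_apply, ite_mul, mul_ite,
          Finset.sum_ite_eq, Finset.sum_ite_eq']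
      rw [hsplit]
      have hsym' : (∑ i, (t * σ i) * M' q i k) = ∑ i, M' q k i * (t * σ i) :=
        Finset.sum_congr rfl fun i _ => by rw [hsym q i k]; ring
      rw [hsym']
      have hfac : (∑ j, M' q k j * (t * σ j)) = t * ∑ l, M' q k l * σ l := by
        rw [Finset.mul_sum]
        exact Finset.sum_congr rfl fun l _ => by ring
      rw [hfac]
      ring
    unfold poissonBracket
    simp only [evq M h hM hh, evq Mhat hhat hMhat hhhat,
      evp M h hM hh hMsymm, evp Mhat hhat hMhat hhhat hMhatsymm]
    rw [hA2, hB2, Finset.sum_mul, Finset.mul_sum, Finset.sum_mul, ← Finset.sum_add_distrib]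
    refine Finset.sum_congr rfl fun k _ => ?_
    have ht : ∀ (d : Fin n → Fin n → ℝ),
        (∑ i, ∑ j, (t * σ i) * d i j * (t * σ j)) = t^2 * ∑ i, ∑ j, σ i * d i j * σ j := by
      intro d
      rw [Finset.mul_sum]
      refine Finset.sum_congr rfl fun i _ => ?_
      rw [Finset.mul_sum]
      refine Finset.sum_congr rfl fun j _ => ?_
      ring
    rw [ht, ht]
    ring
  have hle : ∀ t : ℝ, (1/2) * A * t^3 + B * t ≤ 0 := by
    intro t
    have h0 := hy (q, t • σ)
    have hl : (∑ i, y (q, t • σ) i * (Mhat q).mulVec (t • σ) i) = 0 := by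
      have hmv : ∀ i, (Mhat q).mulVec (t • σ) i = t * (Mhat q).mulVec σ i := by
        intro i
        simp [Matrix.mulVec, dotProduct, Finset.mul_sum, mul_left_comm, mul_comm]
      calc (∑ i, y (q, t • σ) i * (Mhat q).mulVec (t • σ) i)
          = t * ∑ i, (Mhat q).mulVec σ i * y (q, t • σ) i := by
            rw [Finset.mul_sum]
            exact Finset.sum_congr rfl fun i _ => by rw [hmv i]; ring
        _ = 0 := by rw [horth _ (hyW (q, t • σ))]; ring
    rw [hl, key t] at h0
    have := hμ (q, t • σ)
    linarith
  have heq : ∀ t : ℝ, (1/2) * A * t^3 + B * t = 0 := by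
    intro t
    have h1 := hle t
    have h2 := hle (-t)
    nlinarith [h1, h2]
  have e1 := heq 1
  have e2 := heq 2
  constructor
  · nlinarith [e1, e2]
  · nlinarith [e1, e2]
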